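/- Let k be a field, L a finite-dimensional k-vector space, M = L × L^* with quadratic form Q(l, φ) = φ(l), and let Λ L carry the Cl(M, Q)-module structure in which L acts by exterior multiplication and L^* by contraction. Then: (1) the vector 1 ∈ Λ L is annihilated by every element of L^*; (2) the map Cl(M,Q) → Λ L, a ↦ a·1 is surjective; (3) Λ L is a simple Cl(M, Q)-module. -/

import Mathlib

/-- Left exterior multiplication by `l` on the exterior algebra. -/
noncomputable def extMul {k L : Type*} [Field k] [AddCommGroup L] [Module k L] (l : L) :
    ExteriorAlgebra k L →ₗ[k] ExteriorAlgebra k L :=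
  LinearMap.mulLeft k (ExteriorAlgebra.ι k l)

/-- Contraction (interior product) by a functional `φ` on the exterior algebra,
the odd derivation extending `φ`. -/
noncomputable def extContract {k L : Type*} [Field k] [AddCommGroup L] [Module k L]
    (φ : Module.Dual k L) : ExteriorAlgebra k L →ₗ[k] ExteriorAlgebra k L :=
  CliffordAlgebra.contractLeft (Q := (0 : QuadraticForm k L)) φ

namespace Stmt9Aux

variable (k : Type*) {L : Type*} [Field k] [AddCommGroup L] [Module k L]

open ExteriorAlgebra

/-- product of `ι`'s over a list of vectors -/
noncomputable def mon (l : List L) : ExteriorAlgebra k L :=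
  (l.map (ExteriorAlgebra.ι k)).prod

@[simp] lemma mon_nil : mon k ([] : List L) = 1 := rfl

@[simp] lemma mon_cons (v : L) (t : List L) :
    mon k (v :: t) = ExteriorAlgebra.ι k v * mon k t := by
  simp [mon]

lemma mon_append (s t : List L) : mon k (s ++ t) = mon k s * mon k t := by
  simp [mon]

lemma ι_anticomm (u v : L) :
    ExteriorAlgebra.ι k u * ExteriorAlgebra.ι k v
      = -(ExteriorAlgebra.ι k v * ExteriorAlgebra.ι k u) :=
  eq_neg_of_add_eq_zero_left (ExteriorAlgebra.ι_add_mul_swap u v)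

lemma ι_ι_mul (a : L) (x : ExteriorAlgebra k L) :
    ExteriorAlgebra.ι k a * (ExteriorAlgebra.ι k a * x) = 0 := by
  rw [← mul_assoc, ExteriorAlgebra.ι_sq_zero, zero_mul]

lemma mon_swap (t : List L) (v : L) :
    ExteriorAlgebra.ι k v * mon k t = mon k t * ExteriorAlgebra.ι k v ∨
      ExteriorAlgebra.ι k v * mon k t = -(mon k t * ExteriorAlgebra.ι k v) := by
  induction t with
  | nil => left; simp
  | cons u s ih =>
    have h : ExteriorAlgebra.ι k v * mon k (u :: s)
        = -(ExteriorAlgebra.ι k u * (ExteriorAlgebra.ι k v * mon k s)) := by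
      rw [mon_cons, ← mul_assoc, ι_anticomm, neg_mul, mul_assoc]
    rcases ih with h' | h'
    · right; rw [h, h', mon_cons, mul_assoc]
    · left; rw [h, h', mul_neg, neg_neg, mon_cons, mul_assoc]

lemma mon_mul_mon_eq_zero {a : L} {l₁ l₂ : List L} (h₁ : a ∈ l₁) (h₂ : a ∈ l₂) :
    mon k l₁ * mon k l₂ = 0 := by
  obtain ⟨s₁, t₁, rfl⟩ := List.append_of_mem h₁
  obtain ⟨s₂, t₂, rfl⟩ := List.append_of_mem h₂
  have key : mon k (s₁ ++ a :: t₁) * mon k (s₂ ++ a :: t₂)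
      = mon k s₁ * (ExteriorAlgebra.ι k a * mon k (t₁ ++ s₂)
          * (ExteriorAlgebra.ι k a * mon k t₂)) := by
    simp [mon_append, mul_assoc]
  rw [key]
  rcases mon_swap k (t₁ ++ s₂) a with h | h
  · rw [h, mul_assoc, ι_ι_mul, mul_zero, mul_zero]
  · rw [h, neg_mul, mul_assoc, ι_ι_mul, mul_zero, neg_zero, mul_zero]

lemma extContract_one (φ : Module.Dual k L) :
    extContract φ (1 : ExteriorAlgebra k L) = 0 :=
  CliffordAlgebra.contractLeft_one _ _

lemma extContract_ι_mul (φ : Module.Dual k L) (v : L) (x : ExteriorAlgebra k L) :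
    extContract φ (ExteriorAlgebra.ι k v * x) = φ v • x - ExteriorAlgebra.ι k v * extContract φ x :=
  CliffordAlgebra.contractLeft_ι_mul _ _ _

lemma extContract_mon_eq_zero (φ : Module.Dual k L) (l : List L) (h : ∀ v ∈ l, φ v = 0) :
    extContract φ (mon k l) = 0 := by
  induction l with
  | nil => simpa using extContract_one k φ
  | cons v t ih =>
    rw [mon_cons, extContract_ι_mul, h v List.mem_cons_self,
      ih fun w hw => h w (List.mem_cons_of_mem _ hw), mul_zero, zero_smul, sub_zero]

end Stmt9Aux

namespace Stmt9Aux

section BasisPart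

variable {k L : Type*} [Field k] [AddCommGroup L] [Module k L]
variable {n : ℕ} (b : Module.Basis (Fin n) k L)

/-- monomial indexed by a list of basis indices -/
noncomputable def monF (l : List (Fin n)) : ExteriorAlgebra k L :=
  mon k (l.map b)

@[simp] lemma monF_nil : monF b ([] : List (Fin n)) = 1 := rfl

@[simp] lemma monF_cons (i : Fin n) (t : List (Fin n)) :
    monF b (i :: t) = ExteriorAlgebra.ι k (b i) * monF b t := by
  simp [monF]

lemma monF_append (s t : List (Fin n)) : monF b (s ++ t) = monF b s * monF b t := by
  simp [monF, mon_append]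

lemma coord_basis (i j : Fin n) : b.coord i (b j) = if j = i then 1 else 0 := by
  rw [Module.Basis.coord_apply, Module.Basis.repr_self, Finsupp.single_apply]

/-- iterated contraction along a list of basis indices (head first) -/
noncomputable def contrAll (l : List (Fin n)) (x : ExteriorAlgebra k L) : ExteriorAlgebra k L :=
  l.foldl (fun y i => extContract (b.coord i) y) x

@[simp] lemma contrAll_nil (x : ExteriorAlgebra k L) : contrAll b [] x = x := rfl

@[simp] lemma contrAll_cons (i : Fin n) (t : List (Fin n)) (x : ExteriorAlgebra k L) :
    contrAll b (i :: t) x = contrAll b t (extContract (b.coord i) x) := rfl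

lemma contrAll_smul (l : List (Fin n)) (c : k) (x : ExteriorAlgebra k L) :
    contrAll b l (c • x) = c • contrAll b l x := by
  induction l generalizing x with
  | nil => rfl
  | cons i t ih => rw [contrAll_cons, contrAll_cons, map_smul, ih]

lemma contrAll_mem (p : Submodule k (ExteriorAlgebra k L))
    (hcon : ∀ (φ : Module.Dual k L) (x), x ∈ p → extContract φ x ∈ p)
    (l : List (Fin n)) {x : ExteriorAlgebra k L} (hx : x ∈ p) : contrAll b l x ∈ p := by
  induction l generalizing x with
  | nil => exact hx
  | cons i t ih => exact ih (hcon _ _ hx)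

lemma contrAll_monF (l : List (Fin n)) (hl : l.Nodup) : contrAll b l (monF b l) = 1 := by
  induction l with
  | nil => simp
  | cons i t ih =>
    have h0 : extContract (b.coord i) (monF b t) = 0 := by
      refine extContract_mon_eq_zero k _ _ ?_
      rintro v hv
      obtain ⟨j, hj, rfl⟩ := List.mem_map.mp hv
      have hij : i ≠ j := by
        rintro rfl
        exact (List.nodup_cons.mp hl).1 hj
      simp [coord_basis, (hij.symm : j ≠ i)]
    rw [contrAll_cons, monF_cons, extContract_ι_mul, h0, mul_zero, sub_zero,
      coord_basis, if_pos rfl, one_smul]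
    exact ih (List.nodup_cons.mp hl).2

lemma ins (s : List (Fin n)) (hs : s.Pairwise (· < ·)) (i : Fin n) :
    ExteriorAlgebra.ι k (b i) * monF b s = 0 ∨
      ∃ s' : List (Fin n), s'.Pairwise (· < ·) ∧ (∀ x ∈ s', x = i ∨ x ∈ s) ∧
        (ExteriorAlgebra.ι k (b i) * monF b s = monF b s' ∨
          ExteriorAlgebra.ι k (b i) * monF b s = -monF b s') := by
  induction s with
  | nil =>
    right
    exact ⟨[i], List.pairwise_singleton _ i, by simp, Or.inl (by simp)⟩
  | cons j t ih =>
    obtain ⟨h1, h2⟩ := List.pairwise_cons.mp hs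
    rcases lt_trichotomy i j with hij | rfl | hij
    · right
      refine ⟨i :: j :: t, ?_, by simp +contextual, Or.inl (by simp)⟩
      refine List.pairwise_cons.mpr ⟨?_, hs⟩
      intro x hx
      rcases List.mem_cons.mp hx with rfl | hx'
      · exact hij
      · exact hij.trans (h1 x hx')
    · left
      rw [monF_cons, ι_ι_mul]
    · have key : ExteriorAlgebra.ι k (b i) * monF b (j :: t)
          = -(ExteriorAlgebra.ι k (b j) * (ExteriorAlgebra.ι k (b i) * monF b t)) := by
        rw [monF_cons, ← mul_assoc, ι_anticomm, neg_mul, mul_assoc]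
      rcases ih h2 with h0 | ⟨s', hs', hmem, heq⟩
      · left
        rw [key, h0, mul_zero, neg_zero]
      · have hjs' : ∀ x ∈ s', j < x := by
          intro x hx
          rcases hmem x hx with rfl | hx'
          · exact hij
          · exact h1 x hx'
        have hsort : (j :: s').Pairwise (· < ·) := List.pairwise_cons.mpr ⟨hjs', hs'⟩
        have hm : ∀ x ∈ j :: s', x = i ∨ x ∈ j :: t := by
          intro x hx
          rcases List.mem_cons.mp hx with rfl | hx
          · exact Or.inr List.mem_cons_self
          · rcases hmem x hx with rfl | hx'
            · exact Or.inl rfl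
            · exact Or.inr (List.mem_cons_of_mem _ hx')
        right
        rcases heq with h | h
        · exact ⟨j :: s', hsort, hm, Or.inr (by rw [key, h, monF_cons])⟩
        · exact ⟨j :: s', hsort, hm, Or.inl (by rw [key, h, mul_neg, neg_neg, monF_cons])⟩

end BasisPart

end Stmt9Aux

namespace Stmt9Aux

section SpanPart

variable {k L : Type*} [Field k] [AddCommGroup L] [Module k L]
variable {n : ℕ} (b : Module.Basis (Fin n) k L)

/-- the generating set: monomials of strictly sorted index lists -/
noncomputable def gens : Set (ExteriorAlgebra k L) :=
  Set.range fun l : { l : List (Fin n) // l.Pairwise (· < ·) } => monF b l.1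

lemma ins_mem (s : List (Fin n)) (hs : s.Pairwise (· < ·)) (i : Fin n) :
    ExteriorAlgebra.ι k (b i) * monF b s ∈ Submodule.span k (gens b) := by
  rcases ins b s hs i with h | ⟨s', hs', _, h | h⟩
  · rw [h]; exact Submodule.zero_mem _
  · rw [h]; exact Submodule.subset_span ⟨⟨s', hs'⟩, rfl⟩
  · rw [h]; exact Submodule.neg_mem _ (Submodule.subset_span ⟨⟨s', hs'⟩, rfl⟩)

lemma monF_mem (l : List (Fin n)) : monF b l ∈ Submodule.span k (gens b) := by
  induction l with
  | nil => exact Submodule.subset_span ⟨⟨[], List.Pairwise.nil⟩, rfl⟩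
  | cons i t ih =>
    rw [monF_cons]
    refine Submodule.span_induction ?_ ?_ ?_ ?_ ih
    · rintro x ⟨⟨s, hs⟩, rfl⟩
      exact ins_mem b s hs i
    · rw [mul_zero]; exact Submodule.zero_mem _
    · intro x y _ _ hx hy
      rw [mul_add]; exact Submodule.add_mem _ hx hy
    · intro c x _ hx
      rw [mul_smul_comm]; exact Submodule.smul_mem _ _ hx

lemma span_mul_span {x y : ExteriorAlgebra k L}
    (hx : x ∈ Submodule.span k (gens b)) (hy : y ∈ Submodule.span k (gens b)) :
    x * y ∈ Submodule.span k (gens b) := by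
  induction hx using Submodule.span_induction with
  | mem x hx =>
    obtain ⟨⟨s, hs⟩, rfl⟩ := hx
    induction hy using Submodule.span_induction with
    | mem y hy =>
      obtain ⟨⟨t, ht⟩, rfl⟩ := hy
      rw [← monF_append]
      exact monF_mem b _
    | zero => rw [mul_zero]; exact Submodule.zero_mem _
    | add y z _ _ hy hz => rw [mul_add]; exact Submodule.add_mem _ hy hz
    | smul c y _ hy => rw [mul_smul_comm]; exact Submodule.smul_mem _ _ hy
  | zero => rw [zero_mul]; exact Submodule.zero_mem _
  | add x z _ _ hx hz => rw [add_mul]; exact Submodule.add_mem _ hx hz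
  | smul c x _ hx => rw [smul_mul_assoc]; exact Submodule.smul_mem _ _ hx

lemma mem_span_gens (x : ExteriorAlgebra k L) : x ∈ Submodule.span k (gens b) := by
  induction x using CliffordAlgebra.induction with
  | algebraMap r =>
    rw [Algebra.algebraMap_eq_smul_one]
    exact Submodule.smul_mem _ _ (monF_mem b [])
  | ι v =>
    have hv : ExteriorAlgebra.ι k v = ∑ i, b.repr v i • ExteriorAlgebra.ι k (b i) := by
      conv_lhs => rw [← Module.Basis.sum_repr b v]
      rw [map_sum]
      simp_rw [map_smul]
    rw [hv]
    refine Submodule.sum_mem _ fun i _ => Submodule.smul_mem _ _ ?_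
    have : ExteriorAlgebra.ι k (b i) = monF b [i] := by simp
    rw [this]
    exact monF_mem b _
  | mul x y hx hy => exact span_mul_span b hx hy
  | add x y hx hy => exact Submodule.add_mem _ hx hy

lemma mon_mul_mem (p : Submodule k (ExteriorAlgebra k L))
    (hmul : ∀ (v : L) (x), x ∈ p → ExteriorAlgebra.ι k v * x ∈ p)
    (l : List L) {x : ExteriorAlgebra k L} (hx : x ∈ p) : mon k l * x ∈ p := by
  induction l with
  | nil => simpa using hx
  | cons v t ih =>
    rw [mon_cons, mul_assoc]
    exact hmul _ _ ih

lemma reach_one [FiniteDimensional k L] (p : Submodule k (ExteriorAlgebra k L))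
    (hmul : ∀ (v : L) (x), x ∈ p → ExteriorAlgebra.ι k v * x ∈ p)
    (hcon : ∀ (φ : Module.Dual k L) (x), x ∈ p → extContract φ x ∈ p)
    {x : ExteriorAlgebra k L} (hx : x ∈ p) (hx0 : x ≠ 0) :
    (1 : ExteriorAlgebra k L) ∈ p := by
  classical
  set m := Module.finrank k L
  set b : Module.Basis (Fin m) k L := Module.finBasis k L with hb
  obtain ⟨c, hc⟩ := Finsupp.mem_span_range_iff_exists_finsupp.mp (mem_span_gens b x)
  have hcne : c.support.Nonempty := by
    rw [Finsupp.support_nonempty_iff]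
    rintro rfl
    simp at hc
    exact hx0 hc.symm
  -- pick a support element of minimal toFinset-cardinality
  obtain ⟨l₀, hl₀sup, hl₀min⟩ :=
    Finset.exists_min_image c.support (fun l => l.1.toFinset.card) hcne
  set S₀ : Finset (Fin m) := l₀.1.toFinset with hS₀
  set m₀ : List (Fin m) := S₀ᶜ.sort (· ≤ ·) with hm₀
  have hm₀mem : ∀ i, i ∈ m₀ ↔ i ∈ S₀ᶜ := fun i => Finset.mem_sort _
  -- the key computation
  have key : monF b m₀ * x = c l₀ • monF b (m₀ ++ l₀.1) := by
    rw [← hc, Finsupp.sum, Finset.mul_sum]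
    rw [Finset.sum_eq_single l₀]
    · rw [mul_smul_comm, monF_append]
    · intro l hl hne
      rcases Decidable.em (l.1.toFinset ⊆ S₀) with hsub | hnsub
      · exfalso
        have hcard := hl₀min l hl
        have heqS : l.1.toFinset = S₀ := Finset.eq_of_subset_of_card_le hsub hcard
        apply hne
        have hperm : l.1.Perm l₀.1 :=
          List.perm_of_nodup_nodup_toFinset_eq l.2.nodup l₀.2.nodup (by rw [heqS])
        exact Subtype.ext
          (List.Perm.eq_of_pairwise (fun _ _ _ _ h1 h2 => absurd h1 (lt_asymm h2)) l.2 l₀.2 hperm)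
      · obtain ⟨a, hal, haS⟩ := Finset.not_subset.mp hnsub
        have ham₀ : a ∈ m₀ := (hm₀mem a).mpr (Finset.mem_compl.mpr haS)
        have hal' : a ∈ l.1 := List.mem_toFinset.mp hal
        have hz : monF b m₀ * monF b l.1 = 0 := by
          refine mon_mul_mon_eq_zero k (List.mem_map_of_mem (f := ⇑b) ham₀)
            (List.mem_map_of_mem (f := ⇑b) hal')
        rw [mul_smul_comm, hz, smul_zero]
    · intro h
      exact absurd hl₀sup h
  have hnodup : (m₀ ++ l₀.1).Nodup := by
    rw [List.nodup_append]
    refine ⟨Finset.sort_nodup _ _, l₀.2.nodup, ?_⟩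
    intro a ham _ hal rfl
    have h1 : a ∈ S₀ᶜ := (hm₀mem a).mp ham
    have h2 : a ∈ S₀ := List.mem_toFinset.mpr hal
    exact Finset.mem_compl.mp h1 h2
  have hy : monF b m₀ * x ∈ p := mon_mul_mem p hmul _ hx
  have hz : contrAll b (m₀ ++ l₀.1) (monF b m₀ * x) ∈ p := contrAll_mem b p hcon _ hy
  have hzval : contrAll b (m₀ ++ l₀.1) (monF b m₀ * x) = c l₀ • 1 := by
    rw [key, contrAll_smul, contrAll_monF b _ hnodup]
  have hc0 : c l₀ ≠ 0 := Finsupp.mem_support_iff.mp hl₀sup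
  have := Submodule.smul_mem p (c l₀)⁻¹ hz
  rwa [hzval, smul_smul, inv_mul_cancel₀ hc0, one_smul] at this

end SpanPart

end Stmt9Aux

open Stmt9Aux

/-- In the Fock representation of `Cl(M, Q)` on `Λ L` (with `M = L × L^*`,
`Q(l, φ) = φ(l)`, `L` acting by exterior multiplication and `L^*` by contraction):
(1) `1 ∈ Λ L` is annihilated by every element of `L^*`;
(2) `a ↦ a · 1` is surjective from `Cl(M, Q)` to `Λ L`;
(3) `Λ L` is a simple `Cl(M, Q)`-module. -/
theorem stmt9 {k L : Type*} [Field k] [AddCommGroup L] [Module k L] [FiniteDimensional k L]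
    (Q : QuadraticForm k (L × Module.Dual k L)) (hQ : ∀ p, Q p = p.2 p.1)
    (ρ : CliffordAlgebra Q →ₐ[k] Module.End k (ExteriorAlgebra k L))
    (hρ₁ : ∀ l : L, ρ (CliffordAlgebra.ι Q (l, 0)) = extMul l)
    (hρ₂ : ∀ φ : Module.Dual k L, ρ (CliffordAlgebra.ι Q (0, φ)) = extContract φ) :
    (∀ φ : Module.Dual k L, ρ (CliffordAlgebra.ι Q (0, φ)) (1 : ExteriorAlgebra k L) = 0) ∧
      Function.Surjective (fun a : CliffordAlgebra Q => ρ a (1 : ExteriorAlgebra k L)) ∧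
      ∀ p : Submodule k (ExteriorAlgebra k L),
        (∀ (a : CliffordAlgebra Q) (x : ExteriorAlgebra k L), x ∈ p → ρ a x ∈ p) →
        p = ⊥ ∨ p = ⊤ := by
  
  -- surjectivity first
  have hreach : ∀ z y : ExteriorAlgebra k L, (∃ a, ρ a 1 = y) → ∃ a, ρ a 1 = z * y := by
    intro z
    induction z using CliffordAlgebra.induction with
    | algebraMap r =>
      rintro y ⟨a, rfl⟩
      exact ⟨r • a, by rw [map_smul, LinearMap.smul_apply, Algebra.smul_def]⟩
    | ι v =>
      rintro y ⟨a, rfl⟩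
      refine ⟨CliffordAlgebra.ι Q (v, 0) * a, ?_⟩
      rw [map_mul, Module.End.mul_apply, hρ₁]
      rfl
    | mul z₁ z₂ ih₁ ih₂ =>
      rintro y hy
      obtain ⟨a, ha⟩ := ih₂ y hy
      obtain ⟨a', ha'⟩ := ih₁ _ ⟨a, ha⟩
      exact ⟨a', by rw [ha', mul_assoc]⟩
    | add z₁ z₂ ih₁ ih₂ =>
      rintro y hy
      obtain ⟨a₁, ha₁⟩ := ih₁ y hy
      obtain ⟨a₂, ha₂⟩ := ih₂ y hy
      exact ⟨a₁ + a₂, by rw [map_add, LinearMap.add_apply, ha₁, ha₂, add_mul]⟩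
  have hsurj : Function.Surjective (fun a : CliffordAlgebra Q => ρ a (1 : ExteriorAlgebra k L)) := by
    intro y
    obtain ⟨a, ha⟩ := hreach y 1 ⟨1, by simp⟩
    exact ⟨a, by simpa [mul_one] using ha⟩
  refine ⟨?_, hsurj, ?_⟩
  · intro φ
    rw [hρ₂]
    exact extContract_one k φ
  · intro p hp
    by_cases hbot : p = ⊥
    · exact Or.inl hbot
    right
    obtain ⟨x, hxp, hx0⟩ := Submodule.exists_mem_ne_zero_of_ne_bot hbot
    have hmul : ∀ (v : L) (z), z ∈ p → ExteriorAlgebra.ι k v * z ∈ p := by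
      intro v z hz
      have := hp (CliffordAlgebra.ι Q (v, 0)) z hz
      rwa [hρ₁] at this
    have hcon : ∀ (φ : Module.Dual k L) (z), z ∈ p → extContract φ z ∈ p := by
      intro φ z hz
      have := hp (CliffordAlgebra.ι Q (0, φ)) z hz
      rwa [hρ₂] at this
    have h1 : (1 : ExteriorAlgebra k L) ∈ p := reach_one p hmul hcon hxp hx0
    rw [eq_top_iff]
    intro y _
    obtain ⟨a, ha⟩ := hsurj y
    have : ρ a 1 = y := ha
    rw [← this]
    exact hp a 1 h1
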